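/- Under the hypotheses (s−1)ν + s(k−1)χ < 1 (with ν, χ, s, k as in the coherence setup), the matrix D_{S₀}ᵀD_{S₀} is invertible and ‖(D_{S₀}ᵀD_{S₀})^{-1}‖_{1,1} ≤ 1/(1 − (s−1)ν − s(k−1)χ). -/

import Mathlib

/-- The `‖·‖_{1,1}` matrix norm: maximum `ℓ¹` norm over columns. -/
noncomputable def norm11 {α β : Type*} [Fintype α] [Fintype β] (W : Matrix α β ℝ) : ℝ :=
  sSup {x | ∃ j : β, x = ∑ i, |W i j|}

private lemma sum_ite_const_aux {n : ℕ} (i : Fin n) (A B : ℝ) :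
    ∑ j : Fin n, (if j = i then A else B) = A + ((n : ℝ) - 1) * B := by
  have h : ∀ j : Fin n, (if j = i then A else B)
      = (if j = i then A - B else 0) + B := by
    intro j; split <;> ring
  simp_rw [h, Finset.sum_add_distrib, Finset.sum_ite_eq' Finset.univ i (fun _ => A - B)]
  simp [Finset.card_univ]
  ring

/-- If `(s−1)ν + s(k−1)χ < 1`, then `D_{S₀}ᵀD_{S₀}` is invertible and
`‖(D_{S₀}ᵀD_{S₀})⁻¹‖_{1,1} ≤ 1/(1 − (s−1)ν − s(k−1)χ)`. -/
theorem gram_inv_norm11_bound {m k s : ℕ}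
    (D : Matrix (Fin m) (Fin k × Fin s) ℝ)
    (hunit : ∀ j, ∑ i, D i j ^ 2 = 1)
    (ν χ : ℝ) (hν : 0 ≤ ν) (hχ : 0 ≤ χ)
    (hsub : ∀ (i : Fin k) (a b : Fin s), a ≠ b →
      |∑ r, D r (i, a) * D r (i, b)| ≤ ν)
    (hcross : ∀ (i j : Fin k) (a b : Fin s), i ≠ j →
      |∑ r, D r (i, a) * D r (j, b)| ≤ χ)
    (hlt : ((s : ℝ) - 1) * ν + (s : ℝ) * ((k : ℝ) - 1) * χ < 1) :
    IsUnit (D.transpose * D) ∧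
      norm11 (D.transpose * D)⁻¹ ≤
        1 / (1 - ((s : ℝ) - 1) * ν - (s : ℝ) * ((k : ℝ) - 1) * χ) := by
  set δ : ℝ := ((s : ℝ) - 1) * ν + (s : ℝ) * ((k : ℝ) - 1) * χ with hδ
  have hδ1 : δ < 1 := hlt
  have hpos : (0:ℝ) < 1 - ((s : ℝ) - 1) * ν - (s : ℝ) * ((k : ℝ) - 1) * χ := by
    rw [hδ] at hδ1; linarith
  have hrhs : 1 / (1 - ((s : ℝ) - 1) * ν - (s : ℝ) * ((k : ℝ) - 1) * χ) = 1 / (1 - δ) := by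
    rw [hδ]; ring_nf
  have hrhs0 : (0:ℝ) ≤ 1 / (1 - ((s : ℝ) - 1) * ν - (s : ℝ) * ((k : ℝ) - 1) * χ) :=
    le_of_lt (one_div_pos.mpr hpos)
  set G := D.transpose * D with hG
  have hGapp : ∀ p q, G p q = ∑ r, D r p * D r q := by
    intro p q
    simp [hG, Matrix.mul_apply, Matrix.transpose_apply]
  have hGdiag : ∀ p, G p p = 1 := by
    intro p
    rw [hGapp, ← hunit p]
    exact Finset.sum_congr rfl fun r _ => by ring
  -- off-diagonal row sums are at most δ
  have hrow : ∀ p : Fin k × Fin s, ∑ q ∈ Finset.univ.erase p, |G p q| ≤ δ := by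
    rintro ⟨i, a⟩
    have hstep : ∑ q ∈ Finset.univ.erase (i, a), |G (i, a) q|
        ≤ ∑ q ∈ Finset.univ.erase (i, a), (if q.1 = i then ν else χ) := by
      apply Finset.sum_le_sum
      rintro ⟨j, b⟩ hq
      have hq' : (j, b) ≠ (i, a) := Finset.ne_of_mem_erase hq
      by_cases h1 : j = i
      · subst h1
        have hb : a ≠ b := by
          intro h; exact hq' (by rw [h])
        simpa [hGapp] using hsub j a b hb
      · simpa [h1, hGapp] using hcross i j a b (fun h => h1 h.symm)
    refine hstep.trans ?_
    rw [Finset.sum_erase_eq_sub (Finset.mem_univ (i, a))]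
    have htot : ∑ q : Fin k × Fin s, (if q.1 = i then ν else χ)
        = (s : ℝ) * ν + ((k : ℝ) - 1) * ((s : ℝ) * χ) := by
      rw [Fintype.sum_prod_type]
      have : ∀ j : Fin k, (∑ _b : Fin s, (if j = i then ν else χ))
          = (if j = i then (s : ℝ) * ν else (s : ℝ) * χ) := by
        intro j
        rw [Finset.sum_const, Finset.card_univ, Fintype.card_fin, nsmul_eq_mul]
        split <;> rfl
      simp_rw [this]
      exact sum_ite_const_aux i ((s : ℝ) * ν) ((s : ℝ) * χ)
    rw [htot]
    have hc : (if ((i, a) : Fin k × Fin s).1 = i then ν else χ) = ν := if_pos rfl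
    rw [hc, hδ]
    exact le_of_eq (by ring)
  -- invertibility via diagonal dominance (Gershgorin)
  have hdet : G.det ≠ 0 := by
    apply det_ne_zero_of_sum_row_lt_diag
    intro p
    have : ∑ q ∈ Finset.univ.erase p, ‖G p q‖ = ∑ q ∈ Finset.univ.erase p, |G p q| := by
      simp [Real.norm_eq_abs]
    rw [this, hGdiag p]
    rw [norm_one]
    exact lt_of_le_of_lt (hrow p) hδ1
  have hUnit : IsUnit G := (Matrix.isUnit_iff_isUnit_det G).mpr (isUnit_iff_ne_zero.mpr hdet)
  refine ⟨hUnit, ?_⟩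
  rcases isEmpty_or_nonempty (Fin k × Fin s) with he | hne
  · -- empty index type: the sup is over the empty set
    apply Real.sSup_le _ hrhs0
    rintro x ⟨j, rfl⟩
    exact (IsEmpty.false j).elim
  · haveI : Nonempty (Fin k × Fin s) := hne
    set W := G⁻¹ with hW
    have hGW : G * W = 1 := Matrix.mul_nonsing_inv G (isUnit_iff_ne_zero.mpr hdet)
    have hWsymm : ∀ p q, W p q = W q p := by
      have h1 : G.transpose = G := by rw [hG, Matrix.transpose_mul, Matrix.transpose_transpose]
      have h2 : W.transpose = W := by rw [hW, Matrix.transpose_nonsing_inv, h1]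
      intro p q
      conv_rhs => rw [← h2]
      rfl
    have huniv : (Finset.univ : Finset (Fin k × Fin s)).Nonempty := Finset.univ_nonempty
    set M := Finset.univ.sup' huniv (fun p : Fin k × Fin s => ∑ q, |W p q|) with hMdef
    have hMle : ∀ p, ∑ q, |W p q| ≤ M := fun p =>
      Finset.le_sup' (fun p : Fin k × Fin s => ∑ q, |W p q|) (Finset.mem_univ p)
    have hM0 : 0 ≤ M :=
      le_trans (Finset.sum_nonneg fun q _ => abs_nonneg _) (hMle (Classical.arbitrary _))
    -- key fixed point inequality
    have hkey : M ≤ 1 + δ * M := by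
      obtain ⟨p, -, hp⟩ :=
        Finset.exists_mem_eq_sup' huniv (fun p : Fin k × Fin s => ∑ q, |W p q|)
      refine le_trans (le_of_eq (hMdef.trans hp)) ?_
      have hWpq : ∀ q, W p q
          = (1 : Matrix (Fin k × Fin s) (Fin k × Fin s) ℝ) p q
            - ∑ r, (G p r - (1 : Matrix (Fin k × Fin s) (Fin k × Fin s) ℝ) p r) * W r q := by
        intro q
        have h1 : ∑ r, G p r * W r q = (1 : Matrix (Fin k × Fin s) (Fin k × Fin s) ℝ) p q := by
          rw [← Matrix.mul_apply, hGW]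
        have h2 : ∑ r, ((1 : Matrix (Fin k × Fin s) (Fin k × Fin s) ℝ) p r * W r q)
            = W p q := by
          simp [Matrix.one_apply, ite_mul]
        have h3 : ∑ r, (G p r - (1 : Matrix (Fin k × Fin s) (Fin k × Fin s) ℝ) p r) * W r q
            = (∑ r, G p r * W r q)
              - ∑ r, ((1 : Matrix (Fin k × Fin s) (Fin k × Fin s) ℝ) p r * W r q) := by
          rw [← Finset.sum_sub_distrib]
          exact Finset.sum_congr rfl fun r _ => by ring
        rw [h3, h1, h2]
        ring
      have hEsum : ∑ r, |G p r - (1 : Matrix (Fin k × Fin s) (Fin k × Fin s) ℝ) p r| ≤ δ := by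
        rw [← Finset.sum_erase_add _ _ (Finset.mem_univ p)]
        have hpp : |G p p - (1 : Matrix (Fin k × Fin s) (Fin k × Fin s) ℝ) p p| = 0 := by
          rw [Matrix.one_apply_eq, hGdiag]; simp
        rw [hpp, add_zero]
        refine le_trans (le_of_eq (Finset.sum_congr rfl fun r hr => ?_)) (hrow p)
        rw [Matrix.one_apply_ne (Ne.symm (Finset.ne_of_mem_erase hr)), sub_zero]
      calc ∑ q, |W p q|
          ≤ ∑ q, (|(1 : Matrix (Fin k × Fin s) (Fin k × Fin s) ℝ) p q|
              + ∑ r, |G p r - (1 : Matrix (Fin k × Fin s) (Fin k × Fin s) ℝ) p r| * |W r q|) := by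
            apply Finset.sum_le_sum
            intro q _
            rw [hWpq q]
            refine (abs_sub _ _).trans ?_
            refine add_le_add (le_refl _) ?_
            refine (Finset.abs_sum_le_sum_abs _ _).trans ?_
            exact le_of_eq (Finset.sum_congr rfl fun r _ => abs_mul _ _)
        _ = (∑ q, |(1 : Matrix (Fin k × Fin s) (Fin k × Fin s) ℝ) p q|)
              + ∑ r, |G p r - (1 : Matrix (Fin k × Fin s) (Fin k × Fin s) ℝ) p r|
                  * (∑ q, |W r q|) := by
            rw [Finset.sum_add_distrib]
            congr 1
            rw [Finset.sum_comm]
            exact Finset.sum_congr rfl fun r _ => by rw [← Finset.mul_sum]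
        _ ≤ 1 + δ * M := by
            have h1 : ∑ q, |(1 : Matrix (Fin k × Fin s) (Fin k × Fin s) ℝ) p q| = 1 := by
              have : ∀ q, |(1 : Matrix (Fin k × Fin s) (Fin k × Fin s) ℝ) p q|
                  = if p = q then (1:ℝ) else 0 := by
                intro q; rw [Matrix.one_apply]; split <;> simp
              simp [this]
            have h2 : ∑ r, |G p r - (1 : Matrix (Fin k × Fin s) (Fin k × Fin s) ℝ) p r|
                * (∑ q, |W r q|)
                ≤ δ * M := by
              calc ∑ r, |G p r - (1 : Matrix (Fin k × Fin s) (Fin k × Fin s) ℝ) p r|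
                    * (∑ q, |W r q|)
                  ≤ ∑ r, |G p r - (1 : Matrix (Fin k × Fin s) (Fin k × Fin s) ℝ) p r| * M :=
                    Finset.sum_le_sum fun r _ =>
                      mul_le_mul_of_nonneg_left (hMle r) (abs_nonneg _)
                _ = (∑ r, |G p r - (1 : Matrix (Fin k × Fin s) (Fin k × Fin s) ℝ) p r|) * M := by
                    rw [Finset.sum_mul]
                _ ≤ δ * M := mul_le_mul_of_nonneg_right hEsum hM0
            linarith
    have hMbound : M ≤ 1 / (1 - δ) := by
      rw [le_div_iff₀ (by linarith : (0:ℝ) < 1 - δ)]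
      nlinarith
    apply Real.sSup_le _ hrhs0
    rintro x ⟨j, rfl⟩
    rw [hrhs]
    calc ∑ i, |W i j| = ∑ i, |W j i| := Finset.sum_congr rfl fun i _ => by rw [hWsymm]
      _ ≤ M := hMle j
      _ ≤ 1 / (1 - δ) := hMbound
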